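/- arXiv:1501.02831 — 6 statements merged into one kernel-verified Lean document; each statement's English description precedes it below -/
import Mathlib

section
/- Let H be a complex Hilbert space and let S and N be bounded linear operators on H, with T = S + N. Assume: (A) for every λ ∈ ℂ not in the spectrum of S, the operator (S − λI)⁻¹N is quasinilpotent; and (B) for every λ ∈ ℂ not in the spectrum of T, the operator (T − λI)⁻¹N is quasinilpotent. Then the spectrum of T equals the spectrum of S. -/
open Polynomial

/-- A bounded operator is quasinilpotent if its spectrum is contained in `{0}`. -/
def IsQuasinilpotent {H : Type*} [NormedAddCommGroup H] [InnerProductSpace ℂ H]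
    [CompleteSpace H] (A : H →L[ℂ] H) : Prop :=
  spectrum ℂ A ⊆ {0}

lemma quasi_unit_add {H : Type*} [NormedAddCommGroup H] [InnerProductSpace ℂ H]
    [CompleteSpace H] {Q : H →L[ℂ] H} (hQ : IsQuasinilpotent Q) (c : ℂ) (hc : c ≠ 0) :
    IsUnit (algebraMap ℂ (H →L[ℂ] H) c - Q) := by
  have : c ∉ spectrum ℂ Q := fun h => hc (hQ h)
  exact spectrum.notMem_iff.mp this

theorem stmt_0 {H : Type*} [NormedAddCommGroup H] [InnerProductSpace ℂ H] [CompleteSpace H]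
    (S N T : H →L[ℂ] H) (hT : T = S + N)
    (hA : ∀ z : ℂ, z ∉ spectrum ℂ S →
      IsQuasinilpotent (Ring.inverse (S - algebraMap ℂ (H →L[ℂ] H) z) * N))
    (hB : ∀ z : ℂ, z ∉ spectrum ℂ T →
      IsQuasinilpotent (Ring.inverse (T - algebraMap ℂ (H →L[ℂ] H) z) * N)) :
    spectrum ℂ T = spectrum ℂ S := by
  ext z
  rw [← not_iff_not, spectrum.notMem_iff, spectrum.notMem_iff]
  constructor
  · intro hz
    -- z ∉ σ(T), show S - z invertible
    have hz' : z ∉ spectrum ℂ T := spectrum.notMem_iff.mpr hz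
    have hu : IsUnit (T - algebraMap ℂ (H →L[ℂ] H) z) := by
      simpa using hz.neg
    have hQ := hB z hz'
    have h1 : IsUnit (1 - Ring.inverse (T - algebraMap ℂ (H →L[ℂ] H) z) * N) := by
      have := quasi_unit_add hQ 1 one_ne_zero
      simpa using this
    have key : algebraMap ℂ (H →L[ℂ] H) z - S =
        -((T - algebraMap ℂ (H →L[ℂ] H) z) *
          (1 - Ring.inverse (T - algebraMap ℂ (H →L[ℂ] H) z) * N)) := by
      rw [mul_sub, mul_one, ← mul_assoc, Ring.mul_inverse_cancel _ hu, one_mul, hT]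
      abel
    rw [key]
    exact (hu.mul h1).neg
  · intro hz
    have hz' : z ∉ spectrum ℂ S := spectrum.notMem_iff.mpr hz
    have hu : IsUnit (S - algebraMap ℂ (H →L[ℂ] H) z) := by
      simpa using hz.neg
    have hQ := hA z hz'
    have h1 : IsUnit (1 + Ring.inverse (S - algebraMap ℂ (H →L[ℂ] H) z) * N) := by
      have := quasi_unit_add hQ (-1) (by norm_num)
      have h2 : IsUnit (-(1 + Ring.inverse (S - algebraMap ℂ (H →L[ℂ] H) z) * N)) := by
        convert this using 1
        simp only [map_neg, map_one]
        abel
      simpa using h2.neg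
    have key : algebraMap ℂ (H →L[ℂ] H) z - T =
        -((S - algebraMap ℂ (H →L[ℂ] H) z) *
          (1 + Ring.inverse (S - algebraMap ℂ (H →L[ℂ] H) z) * N)) := by
      rw [mul_add, mul_one, ← mul_assoc, Ring.mul_inverse_cancel _ hu, one_mul, hT]
      abel
    rw [key]
    exact (hu.mul h1).neg
end

section
/- Let H be a complex Hilbert space and let S and N be bounded linear operators on H with N compact, and set T = S + N. Assume: (A) for every λ ∈ ℂ not in the spectrum of S, the operator (S − λI)⁻¹N is quasinilpotent; and (B) for every λ ∈ ℂ not in the spectrum of T, the operator (T − λI)⁻¹N is quasinilpotent. Then for every polynomial p with complex coefficients, the operator p(T) − p(S) is compact, and σ(p(T)) = σ(p(S)) = p(σ(S)) = p(σ(T)). -/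
open Polynomial

lemma quasinil_unit {H : Type*} [NormedAddCommGroup H] [InnerProductSpace ℂ H]
    [CompleteSpace H] {A : H →L[ℂ] H} (h : IsQuasinilpotent A) (c : ℂ) (hc : c ≠ 0) :
    IsUnit (algebraMap ℂ (H →L[ℂ] H) c - A) := by
  have : c ∉ spectrum ℂ A := fun hmem => hc (h hmem)
  exact spectrum.notMem_iff.mp this

theorem stmt_1 {H : Type*} [NormedAddCommGroup H] [InnerProductSpace ℂ H] [CompleteSpace H]
    (S N T : H →L[ℂ] H) (hT : T = S + N) (hN : IsCompactOperator (⇑N))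
    (hA : ∀ z : ℂ, z ∉ spectrum ℂ S →
      IsQuasinilpotent (Ring.inverse (S - algebraMap ℂ (H →L[ℂ] H) z) * N))
    (hB : ∀ z : ℂ, z ∉ spectrum ℂ T →
      IsQuasinilpotent (Ring.inverse (T - algebraMap ℂ (H →L[ℂ] H) z) * N)) :
    ∀ p : ℂ[X],
      IsCompactOperator (⇑(aeval T p - aeval S p)) ∧
      spectrum ℂ (aeval T p) = spectrum ℂ (aeval S p) ∧
      spectrum ℂ (aeval S p) = (fun z => p.eval z) '' spectrum ℂ S ∧
      (fun z => p.eval z) '' spectrum ℂ S = (fun z => p.eval z) '' spectrum ℂ T := by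
  -- spectra of S and T coincide
  have hspec : spectrum ℂ S = spectrum ℂ T := by
    ext z
    constructor
    · intro hz
      by_contra hzT
      have hq := hB z hzT
      have hu : IsUnit (algebraMap ℂ (H →L[ℂ] H) z - T) := spectrum.notMem_iff.mp hzT
      have hu' : IsUnit (T - algebraMap ℂ (H →L[ℂ] H) z) := by
        rw [← neg_sub]; exact hu.neg
      have h1 : IsUnit (1 - Ring.inverse (T - algebraMap ℂ (H →L[ℂ] H) z) * N) := by
        have := quasinil_unit hq 1 one_ne_zero
        simpa using this
      have key : (T - algebraMap ℂ (H →L[ℂ] H) z) *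
          (1 - Ring.inverse (T - algebraMap ℂ (H →L[ℂ] H) z) * N)
          = S - algebraMap ℂ (H →L[ℂ] H) z := by
        rw [mul_sub, mul_one, ← mul_assoc, Ring.mul_inverse_cancel _ hu', one_mul, hT]
        abel
      have : IsUnit (S - algebraMap ℂ (H →L[ℂ] H) z) := key ▸ hu'.mul h1
      have : IsUnit (algebraMap ℂ (H →L[ℂ] H) z - S) := by
        rw [← neg_sub]; exact this.neg
      exact (spectrum.notMem_iff.mpr this) hz
    · intro hz
      by_contra hzS
      have hq := hA z hzS
      have hu : IsUnit (algebraMap ℂ (H →L[ℂ] H) z - S) := spectrum.notMem_iff.mp hzS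
      have hu' : IsUnit (S - algebraMap ℂ (H →L[ℂ] H) z) := by
        rw [← neg_sub]; exact hu.neg
      have h1 : IsUnit (1 + Ring.inverse (S - algebraMap ℂ (H →L[ℂ] H) z) * N) := by
        have := quasinil_unit hq (-1) (by norm_num)
        rw [map_neg, map_one] at this
        have : IsUnit (-(1 + Ring.inverse (S - algebraMap ℂ (H →L[ℂ] H) z) * N)) := by
          convert this using 1; abel
        simpa using this.neg
      have key : (S - algebraMap ℂ (H →L[ℂ] H) z) *
          (1 + Ring.inverse (S - algebraMap ℂ (H →L[ℂ] H) z) * N)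
          = T - algebraMap ℂ (H →L[ℂ] H) z := by
        rw [mul_add, mul_one, ← mul_assoc, Ring.mul_inverse_cancel _ hu', one_mul, hT]
        abel
      have : IsUnit (T - algebraMap ℂ (H →L[ℂ] H) z) := key ▸ hu'.mul h1
      have : IsUnit (algebraMap ℂ (H →L[ℂ] H) z - T) := by
        rw [← neg_sub]; exact this.neg
      exact (spectrum.notMem_iff.mpr this) hz
  -- powers differ by compact operators
  have hpow : ∀ n : ℕ, IsCompactOperator (⇑(T ^ n - S ^ n : H →L[ℂ] H)) := by
    intro n
    induction n with
    | zero =>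
      simp only [pow_zero, sub_self, ContinuousLinearMap.coe_zero]
      exact isCompactOperator_zero
    | succ n ih =>
      have heq : (T ^ (n + 1) - S ^ (n + 1) : H →L[ℂ] H)
          = T * (T ^ n - S ^ n) + N * S ^ n := by
        rw [pow_succ' T, pow_succ' S, hT]; noncomm_ring
      rw [heq]
      have h1 : IsCompactOperator (⇑(T * (T ^ n - S ^ n) : H →L[ℂ] H)) := ih.clm_comp T
      have h2 : IsCompactOperator (⇑(N * S ^ n : H →L[ℂ] H)) := hN.comp_clm (S ^ n)
      exact h1.add h2
  -- compactness of p(T) - p(S)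
  have hcomp : ∀ p : ℂ[X], IsCompactOperator (⇑(aeval T p - aeval S p)) := by
    intro p
    induction p using Polynomial.induction_on' with
    | monomial n a =>
      have heq : (aeval T (monomial n a) - aeval S (monomial n a) : H →L[ℂ] H)
          = a • (T ^ n - S ^ n) := by
        simp [aeval_monomial, Algebra.smul_def, mul_sub]
      rw [heq]
      have := (hpow n).smul a
      simpa using this
    | add p q hp hq =>
      have heq : (aeval T (p + q) - aeval S (p + q) : H →L[ℂ] H)
          = (aeval T p - aeval S p) + (aeval T q - aeval S q) := by
        simp only [map_add]; abel
      rw [heq]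
      exact hp.add hq
  intro p
  rcases subsingleton_or_nontrivial H with hH | hH
  · have hsub : Subsingleton (H →L[ℂ] H) := ⟨fun a b => by ext x; exact Subsingleton.elim _ _⟩
    have hempty : ∀ a : H →L[ℂ] H, spectrum ℂ a = ∅ := by
      intro a
      rw [Set.eq_empty_iff_forall_notMem]
      intro z hz
      exact (spectrum.notMem_iff.mpr (isUnit_of_subsingleton _)) hz
    refine ⟨hcomp p, ?_, ?_, ?_⟩ <;> simp [hempty]
  · have : Nontrivial (H →L[ℂ] H) :=
      ⟨1, 0, fun h => by
        obtain ⟨x, hx⟩ := exists_ne (0 : H)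
        exact hx (by simpa using DFunLike.congr_fun h x)⟩
    refine ⟨hcomp p, ?_, ?_, ?_⟩
    · rw [spectrum.map_polynomial_aeval T p, spectrum.map_polynomial_aeval S p, hspec]
    · exact spectrum.map_polynomial_aeval S p
    · rw [hspec]
end

section
/- Let H be a complex Hilbert space and let S and N be bounded linear operators on H with N compact, and set T = S + N. Assume: (A) for every λ ∈ ℂ not in the spectrum of S, the operator (S − λI)⁻¹N is quasinilpotent; and (B) for every λ ∈ ℂ not in the spectrum of T, the operator (T − λI)⁻¹N is quasinilpotent. Let p and q be polynomials with complex coefficients such that q has no zeros on σ(T). Then q(T) and q(S) are invertible bounded operators, and the operator p(T)·q(T)⁻¹ − p(S)·q(S)⁻¹ is compact. -/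
open Polynomial

section Aux

variable {H : Type*} [NormedAddCommGroup H] [InnerProductSpace ℂ H] [CompleteSpace H]

private lemma compact_mul_left (A B : H →L[ℂ] H) (h : IsCompactOperator ⇑B) :
    IsCompactOperator ⇑(A * B) := by
  have e : ⇑(A * B) = ⇑A ∘ ⇑B := rfl
  rw [e]
  exact h.continuous_comp A.continuous

private lemma compact_mul_right (A B : H →L[ℂ] H) (h : IsCompactOperator ⇑A) :
    IsCompactOperator ⇑(A * B) := by
  have e : ⇑(A * B) = ⇑A ∘ ⇑B := rfl
  rw [e]
  exact h.comp_clm B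

private lemma pow_diff_compact (S N : H →L[ℂ] H) (hN : IsCompactOperator ⇑N) :
    ∀ n : ℕ, IsCompactOperator ⇑((S + N) ^ n - S ^ n)
  | 0 => by simpa using isCompactOperator_zero
  | (n + 1) => by
    have h1 : (S + N) ^ (n + 1) - S ^ (n + 1)
        = (S + N) * ((S + N) ^ n - S ^ n) + N * S ^ n := by
      rw [pow_succ', pow_succ']
      noncomm_ring
    rw [h1]
    have e : ⇑((S + N) * ((S + N) ^ n - S ^ n) + N * S ^ n)
        = ⇑((S + N) * ((S + N) ^ n - S ^ n)) + ⇑(N * S ^ n) := rfl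
    rw [e]
    exact (compact_mul_left _ _ (pow_diff_compact S N hN n)).add
      (compact_mul_right _ _ hN)

private lemma aeval_diff_compact (S N : H →L[ℂ] H) (hN : IsCompactOperator ⇑N) (r : ℂ[X]) :
    IsCompactOperator ⇑(aeval (S + N) r - aeval S r) := by
  induction r using Polynomial.induction_on' with
  | add a b ha hb =>
    have h1 : aeval (S + N) (a + b) - aeval S (a + b)
        = (aeval (S + N) a - aeval S a) + (aeval (S + N) b - aeval S b) := by
      rw [map_add, map_add]; abel
    rw [h1]
    have e : ⇑(((aeval (S + N)) a - (aeval S) a) + ((aeval (S + N)) b - (aeval S) b))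
        = ⇑((aeval (S + N)) a - (aeval S) a) + ⇑((aeval (S + N)) b - (aeval S) b) := rfl
    rw [e]
    exact ha.add hb
  | monomial n c =>
    have h1 : aeval (S + N) (monomial n c) - aeval S (monomial n c)
        = algebraMap ℂ (H →L[ℂ] H) c * ((S + N) ^ n - S ^ n) := by
      rw [aeval_monomial, aeval_monomial, mul_sub]
    rw [h1]
    exact compact_mul_left _ _ (pow_diff_compact S N hN n)

end Aux

theorem stmt_2 {H : Type*} [NormedAddCommGroup H] [InnerProductSpace ℂ H] [CompleteSpace H]
    (S N T : H →L[ℂ] H) (hT : T = S + N) (hN : IsCompactOperator (⇑N))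
    (hA : ∀ z : ℂ, z ∉ spectrum ℂ S →
      IsQuasinilpotent (Ring.inverse (S - algebraMap ℂ (H →L[ℂ] H) z) * N))
    (hB : ∀ z : ℂ, z ∉ spectrum ℂ T →
      IsQuasinilpotent (Ring.inverse (T - algebraMap ℂ (H →L[ℂ] H) z) * N))
    (p q : ℂ[X]) (hq : ∀ z ∈ spectrum ℂ T, q.eval z ≠ 0) :
    IsUnit (aeval T q) ∧ IsUnit (aeval S q) ∧
      IsCompactOperator
        (⇑(aeval T p * Ring.inverse (aeval T q) - aeval S p * Ring.inverse (aeval S q))) := by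
  -- σ S ⊆ σ T
  have hsub : spectrum ℂ S ⊆ spectrum ℂ T := by
    intro z hz
    by_contra hzT
    have hu : IsUnit (T - algebraMap ℂ (H →L[ℂ] H) z) := by
      have h := (spectrum.notMem_iff.mp hzT).neg
      rwa [neg_sub] at h
    have hq1 : IsUnit (1 - Ring.inverse (T - algebraMap ℂ (H →L[ℂ] H) z) * N) := by
      have hqn := hB z hzT
      have h1 : (1 : ℂ) ∉ spectrum ℂ (Ring.inverse (T - algebraMap ℂ (H →L[ℂ] H) z) * N) :=
        fun h => one_ne_zero (hqn h)
      have h2 := spectrum.notMem_iff.mp h1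
      rwa [map_one] at h2
    have key : S - algebraMap ℂ (H →L[ℂ] H) z
        = (T - algebraMap ℂ (H →L[ℂ] H) z)
          * (1 - Ring.inverse (T - algebraMap ℂ (H →L[ℂ] H) z) * N) := by
      rw [mul_sub, mul_one, ← mul_assoc, Ring.mul_inverse_cancel _ hu, one_mul, hT]
      abel
    have hS : IsUnit (S - algebraMap ℂ (H →L[ℂ] H) z) := key ▸ hu.mul hq1
    have hS' := hS.neg
    rw [neg_sub] at hS'
    exact absurd hz (spectrum.notMem_iff.mpr hS')
  have hqS : ∀ z ∈ spectrum ℂ S, q.eval z ≠ 0 := fun z hz => hq z (hsub hz)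
  -- invertibility of q(T) and q(S)
  have isUnit_aeval : ∀ (A : H →L[ℂ] H), (∀ z ∈ spectrum ℂ A, q.eval z ≠ 0) →
      IsUnit (aeval A q) := by
    intro A hA
    rcases subsingleton_or_nontrivial (H →L[ℂ] H) with h | h
    · exact isUnit_of_subsingleton _
    · rw [← spectrum.zero_notMem_iff ℂ, spectrum.map_polynomial_aeval]
      rintro ⟨z, hz, hz0⟩
      exact hA z hz hz0
  have hUT : IsUnit (aeval T q) := isUnit_aeval T hq
  have hUS : IsUnit (aeval S q) := isUnit_aeval S hqS
  refine ⟨hUT, hUS, ?_⟩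
  -- compactness
  have hY : IsCompactOperator ⇑(aeval T q - aeval S q) := by
    rw [hT]; exact aeval_diff_compact S N hN q
  have hX : IsCompactOperator ⇑(aeval T p - aeval S p) := by
    rw [hT]; exact aeval_diff_compact S N hN p
  have h1 : Ring.inverse (aeval T q) * ((aeval T q - aeval S q) * Ring.inverse (aeval S q))
      = Ring.inverse (aeval S q) - Ring.inverse (aeval T q) := by
    rw [← mul_assoc, mul_sub, Ring.inverse_mul_cancel _ hUT, sub_mul, one_mul, mul_assoc,
      Ring.mul_inverse_cancel _ hUS, mul_one]
  have hid : aeval T p * Ring.inverse (aeval T q) - aeval S p * Ring.inverse (aeval S q)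
      = (aeval T p - aeval S p) * Ring.inverse (aeval T q)
        - aeval S p * (Ring.inverse (aeval T q)
          * ((aeval T q - aeval S q) * Ring.inverse (aeval S q))) := by
    rw [h1]
    noncomm_ring
  rw [hid]
  have e : ⇑(((aeval T) p - (aeval S) p) * Ring.inverse ((aeval T) q) -
        (aeval S) p * (Ring.inverse ((aeval T) q)
          * (((aeval T) q - (aeval S) q) * Ring.inverse ((aeval S) q))))
      = ⇑(((aeval T) p - (aeval S) p) * Ring.inverse ((aeval T) q)) -
        ⇑((aeval S) p * (Ring.inverse ((aeval T) q)
          * (((aeval T) q - (aeval S) q) * Ring.inverse ((aeval S) q)))) := rfl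
  rw [e]
  exact (compact_mul_right _ _ hX).sub
    (compact_mul_left _ _ (compact_mul_left _ _ (compact_mul_right _ _ hY)))
end

section
/- Let H be a complex Hilbert space, S a bounded self-adjoint operator on H, and V a bounded operator on H. For λ with Im λ ≠ 0 set c_n(λ) = (−(Im λ)·(S − λI)⁻¹V)ⁿ. Suppose there exist M > 0 and α > 0 such that ‖c_n(λ)‖ ≤ (M/(ln(n+1))^α)ⁿ for all n ≥ 1 and all λ with Im λ ≠ 0. For y ≠ 0 define r_n(y) = sup_{x ∈ ℝ} ‖c_n(x + iy)‖^{1/n} and let N(y) be the number of indices n ≥ 1 with r_n(y) > |y|/2. Then for every y with 0 < |y|, the set {n ≥ 1 : r_n(y) > |y|/2} is finite and ln N(y) < (2M/|y|)^{1/α} whenever N(y) ≥ 1. -/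
theorem stmt_6 {H : Type*} [NormedAddCommGroup H] [InnerProductSpace ℂ H] [CompleteSpace H]
    (S V : H →L[ℂ] H) (hS : IsSelfAdjoint S)
    (c : ℕ → ℂ → (H →L[ℂ] H))
    (hc : ∀ (n : ℕ) (z : ℂ),
      c n z = (-((z.im : ℂ) • (Ring.inverse (S - algebraMap ℂ (H →L[ℂ] H) z) * V))) ^ n)
    (M α : ℝ) (hM : 0 < M) (hα : 0 < α)
    (hbound : ∀ n : ℕ, 1 ≤ n → ∀ z : ℂ, z.im ≠ 0 →
      ‖c n z‖ ≤ (M / Real.log (n + 1) ^ α) ^ n)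
    (r : ℕ → ℝ → ℝ)
    (hr : ∀ (n : ℕ) (y : ℝ),
      r n y = ⨆ x : ℝ, ‖c n ((x : ℂ) + (y : ℂ) * Complex.I)‖ ^ ((1 : ℝ) / n)) :
    ∀ y : ℝ, y ≠ 0 →
      {n : ℕ | 1 ≤ n ∧ |y| / 2 < r n y}.Finite ∧
      (1 ≤ {n : ℕ | 1 ≤ n ∧ |y| / 2 < r n y}.ncard →
        Real.log {n : ℕ | 1 ≤ n ∧ |y| / 2 < r n y}.ncard < (2 * M / |y|) ^ ((1 : ℝ) / α)) := by
  intro y hy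
  have hy' : 0 < |y| := abs_pos.mpr hy
  set K : ℝ := (2 * M / |y|) ^ ((1 : ℝ) / α) with hKdef
  have h2My : 0 < 2 * M / |y| := by positivity
  have hKpos : 0 < K := Real.rpow_pos_of_pos h2My _
  -- Step 1: bound on r
  have hrle : ∀ n : ℕ, 1 ≤ n → r n y ≤ M / Real.log (n + 1) ^ α := by
    intro n hn
    have hn1 : (1 : ℝ) ≤ (n : ℝ) := by exact_mod_cast hn
    have hlog : 0 < Real.log ((n : ℝ) + 1) := Real.log_pos (by linarith)
    have hB : 0 < M / Real.log ((n : ℝ) + 1) ^ α := by positivity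
    rw [hr]
    apply ciSup_le
    intro x
    have him : ((x : ℂ) + (y : ℂ) * Complex.I).im = y := by simp
    have h1 := hbound n hn ((x : ℂ) + (y : ℂ) * Complex.I) (by rw [him]; exact hy)
    have hnne : (n : ℝ) ≠ 0 := by positivity
    calc ‖c n ((x : ℂ) + (y : ℂ) * Complex.I)‖ ^ ((1 : ℝ) / n)
        ≤ ((M / Real.log ((n : ℝ) + 1) ^ α) ^ n) ^ ((1 : ℝ) / n) := by
          apply Real.rpow_le_rpow (norm_nonneg _) h1 (by positivity)
      _ = M / Real.log ((n : ℝ) + 1) ^ α := by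
          rw [← Real.rpow_natCast (M / Real.log ((n : ℝ) + 1) ^ α) n,
            ← Real.rpow_mul hB.le, mul_one_div, div_self hnne, Real.rpow_one]
  -- Step 2: elements of the set satisfy log(n+1) < K
  have hkey : ∀ n ∈ {n : ℕ | 1 ≤ n ∧ |y| / 2 < r n y}, Real.log ((n : ℝ) + 1) < K := by
    intro n hn
    obtain ⟨hn1, hn2⟩ := hn
    have hn1' : (1 : ℝ) ≤ (n : ℝ) := by exact_mod_cast hn1
    have hlog : 0 < Real.log ((n : ℝ) + 1) := Real.log_pos (by linarith)
    have hle := hrle n hn1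
    have hlt : |y| / 2 < M / Real.log ((n : ℝ) + 1) ^ α := lt_of_lt_of_le hn2 hle
    have hLpos : 0 < Real.log ((n : ℝ) + 1) ^ α := Real.rpow_pos_of_pos hlog _
    have h3 : Real.log ((n : ℝ) + 1) ^ α < 2 * M / |y| := by
      rw [lt_div_iff₀ hLpos] at hlt
      rw [lt_div_iff₀ hy']
      nlinarith
    have h4 : (Real.log ((n : ℝ) + 1) ^ α) ^ ((1 : ℝ) / α) < K :=
      Real.rpow_lt_rpow (le_of_lt hLpos) h3 (by positivity)
    rwa [← Real.rpow_mul hlog.le, mul_one_div, div_self hα.ne', Real.rpow_one] at h4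
  have hexp : ∀ n ∈ {n : ℕ | 1 ≤ n ∧ |y| / 2 < r n y}, (n : ℝ) + 1 < Real.exp K := by
    intro n hn
    exact (Real.log_lt_iff_lt_exp (by positivity)).mp (hkey n hn)
  set m : ℕ := ⌈Real.exp K⌉₊ with hm
  have hsub : {n : ℕ | 1 ≤ n ∧ |y| / 2 < r n y} ⊆ Set.Ico 1 m := by
    intro n hn
    refine ⟨hn.1, ?_⟩
    have := hexp n hn
    exact Nat.lt_ceil.mpr (by linarith)
  have hfin : {n : ℕ | 1 ≤ n ∧ |y| / 2 < r n y}.Finite :=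
    (Set.finite_Ico 1 m).subset hsub
  refine ⟨hfin, ?_⟩
  intro hN
  have hcard : {n : ℕ | 1 ≤ n ∧ |y| / 2 < r n y}.ncard ≤ m - 1 := by
    have h1 : {n : ℕ | 1 ≤ n ∧ |y| / 2 < r n y}.ncard ≤ (Set.Ico 1 m).ncard :=
      Set.ncard_le_ncard hsub (Set.finite_Ico 1 m)
    rwa [← Finset.coe_Ico, Set.ncard_coe_finset, Nat.card_Ico] at h1
  have hm2 : 2 ≤ m := by omega
  have hmlt : (m : ℝ) < Real.exp K + 1 := Nat.ceil_lt_add_one (Real.exp_pos K).le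
  have hNlt : ({n : ℕ | 1 ≤ n ∧ |y| / 2 < r n y}.ncard : ℝ) < Real.exp K := by
    have : (({n : ℕ | 1 ≤ n ∧ |y| / 2 < r n y}.ncard : ℝ)) ≤ ((m : ℝ) - 1) := by
      have := hcard
      have h' : ((m - 1 : ℕ) : ℝ) = (m : ℝ) - 1 := by
        have : 1 ≤ m := by omega
        push_cast [Nat.cast_sub this]; ring
      calc (({n : ℕ | 1 ≤ n ∧ |y| / 2 < r n y}.ncard : ℝ))
          ≤ ((m - 1 : ℕ) : ℝ) := by exact_mod_cast hcard
        _ = (m : ℝ) - 1 := h'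
    linarith
  have hNpos : (0 : ℝ) < ({n : ℕ | 1 ≤ n ∧ |y| / 2 < r n y}.ncard : ℝ) := by
    exact_mod_cast hN
  exact (Real.log_lt_iff_lt_exp hNpos).mpr hNlt
end

section
/- Fix β > 0 and a real constant C, and define E_β(x) = ∫₀^∞ (1/Γ(s)) e^{−Cs} s^{β−1} x^{s−1} ds for x > 0. Then E_β is continuous on every interval (0,ω], and there exist δ ∈ (0,1) and K > 0 such that for all 0 < x < δ: |E_β(x) − Γ(β+1)/(x·|ln x|^{β+1})| ≤ K/(x·|ln x|^{β+2}). In particular, x·|ln x|^{β+1}·E_β(x) → Γ(β+1) as x → 0⁺. -/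
open MeasureTheory Set

lemma gamma_lb {T s : ℝ} (hT : 1 ≤ T) (hs : 1 ≤ s) :
    Real.exp (-(2*T)) * T ^ s ≤ Real.Gamma s := by
  have hT0 : (0:ℝ) < T := lt_of_lt_of_le one_pos hT
  have hs0 : (0:ℝ) < s := lt_of_lt_of_le one_pos hs
  rw [Real.Gamma_eq_integral hs0]
  have hsub : Ioc T (2*T) ⊆ Ioi (0:ℝ) := fun x hx => lt_trans hT0 hx.1
  have hinti : IntegrableOn (fun x => Real.exp (-x) * x ^ (s-1)) (Ioi 0) :=
    Real.GammaIntegral_convergent hs0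
  have step1 : ∫ x in Ioc T (2*T), Real.exp (-x) * x ^ (s-1) ≤
      ∫ x in Ioi 0, Real.exp (-x) * x ^ (s-1) := by
    apply setIntegral_mono_set hinti
    · filter_upwards [ae_restrict_mem measurableSet_Ioi] with x hx
      exact mul_nonneg (Real.exp_pos _).le (Real.rpow_nonneg (le_of_lt hx) _)
    · exact HasSubset.Subset.eventuallyLE hsub
  have step2 : ∫ x in Ioc T (2*T), (Real.exp (-(2*T)) * T ^ (s-1)) ≤
      ∫ x in Ioc T (2*T), Real.exp (-x) * x ^ (s-1) := by
    apply setIntegral_mono_on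
    · exact integrableOn_const measure_Ioc_lt_top.ne
    · exact hinti.mono_set hsub
    · exact measurableSet_Ioc
    · intro x hx
      have hx1 : T ≤ x := le_of_lt hx.1
      apply mul_le_mul
      · exact Real.exp_le_exp.2 (by linarith [hx.2])
      · exact Real.rpow_le_rpow hT0.le hx1 (by linarith)
      · positivity
      · positivity
  have step3 : ∫ x in Ioc T (2*T), (Real.exp (-(2*T)) * T ^ (s-1)) =
      T * (Real.exp (-(2*T)) * T ^ (s-1)) := by
    rw [setIntegral_const, measureReal_def, Real.volume_Ioc, smul_eq_mul,
      ENNReal.toReal_ofReal (by linarith : (0:ℝ) ≤ 2*T - T)]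
    ring_nf
  have key : Real.exp (-(2*T)) * T ^ s = T * (Real.exp (-(2*T)) * T ^ (s-1)) := by
    rw [show s = (s-1) + 1 by ring, Real.rpow_add_one hT0.ne']
    ring_nf
  rw [key]
  calc T * (Real.exp (-(2*T)) * T ^ (s-1))
      = ∫ x in Ioc T (2*T), (Real.exp (-(2*T)) * T ^ (s-1)) := step3.symm
    _ ≤ _ := le_trans step2 step1

lemma gamma_cont : ContinuousOn Real.Gamma (Ioi (0:ℝ)) := fun s hs =>
  (Real.differentiableAt_Gamma (fun m => by
    have h1 : (0:ℝ) < s := hs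
    have h2 : -(m:ℝ) ≤ 0 := neg_nonpos.mpr (Nat.cast_nonneg m)
    intro h; rw [h] at h1; linarith)).continuousAt.continuousWithinAt

lemma cont_master (p a : ℝ) :
    ContinuousOn (fun s => Real.exp (a*s) * s ^ (p-1) / Real.Gamma s) (Ioi (0:ℝ)) := by
  apply ContinuousOn.div
  · exact ((Real.continuous_exp.comp (continuous_const.mul continuous_id)).continuousOn).mul
      (fun s hs => (Real.continuousAt_rpow_const s (p-1) (Or.inl (ne_of_gt hs))).continuousWithinAt)
  · exact gamma_cont
  · exact fun s hs => (Real.Gamma_pos_of_pos hs).ne'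

lemma exp_gamma_inv_bound (a : ℝ) : ∃ c > 0, ∀ s : ℝ, 0 < s →
    Real.exp (a*s) * (Real.Gamma s)⁻¹ ≤ c * Real.exp (-s) := by
  set T := Real.exp (|a| + 1) with hTdef
  have hT : 1 ≤ T := Real.one_le_exp (by positivity)
  refine ⟨Real.exp (2*T) + Real.exp (|a| + 3), by positivity, fun s hs => ?_⟩
  rcases le_or_gt s 1 with h1 | h1
  · -- small s
    have hG : Real.Gamma (s+1) = s * Real.Gamma s := Real.Gamma_add_one hs.ne'
    have hge : Real.exp (-2) ≤ Real.Gamma (s+1) := by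
      have := gamma_lb (le_refl (1:ℝ)) (by linarith : 1 ≤ s + 1)
      rwa [Real.one_rpow, mul_one, show -(2*(1:ℝ)) = -2 by ring] at this
    have hGpos : 0 < Real.Gamma s := Real.Gamma_pos_of_pos hs
    have hinv : (Real.Gamma s)⁻¹ = s * (Real.Gamma (s+1))⁻¹ := by
      rw [hG, mul_inv]
      field_simp
    have hGinv : (Real.Gamma (s+1))⁻¹ ≤ Real.exp 2 := by
      have h3 : (0:ℝ) < Real.exp (-2) := Real.exp_pos _
      have := inv_anti₀ h3 hge
      rwa [← Real.exp_neg, neg_neg] at this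
    calc Real.exp (a*s) * (Real.Gamma s)⁻¹ = Real.exp (a*s) * (s * (Real.Gamma (s+1))⁻¹) := by
          rw [hinv]
      _ ≤ Real.exp |a| * (1 * Real.exp 2) := by
          apply mul_le_mul
          · apply Real.exp_le_exp.2
            calc a * s ≤ |a| * s := mul_le_mul_of_nonneg_right (le_abs_self a) hs.le
              _ ≤ |a| * 1 := mul_le_mul_of_nonneg_left h1 (abs_nonneg a)
              _ = |a| := mul_one _
          · exact mul_le_mul h1 hGinv (by positivity) zero_le_one
          · positivity
          · positivity
      _ = Real.exp (|a| + 2) := by rw [one_mul, ← Real.exp_add]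
      _ ≤ Real.exp (|a| + 3) * Real.exp (-s) := by
          rw [← Real.exp_add]; apply Real.exp_le_exp.2; linarith
      _ ≤ _ := by
          apply mul_le_mul_of_nonneg_right _ (Real.exp_pos _).le
          have := Real.exp_pos (2*T); linarith
  · -- large s
    have hs1 : (1:ℝ) ≤ s := h1.le
    have hGlb : Real.exp (-(2*T)) * T ^ s ≤ Real.Gamma s := gamma_lb hT hs1
    have hTs : T ^ s = Real.exp ((|a|+1) * s) := by
      rw [hTdef, ← Real.exp_mul]
    have hpos : 0 < Real.exp (-(2*T)) * T ^ s := by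
      rw [hTs]; positivity
    have hGinv : (Real.Gamma s)⁻¹ ≤ Real.exp (2*T) * Real.exp (-((|a|+1) * s)) := by
      have h2 := inv_anti₀ hpos hGlb
      rwa [mul_inv, hTs, ← Real.exp_neg, ← Real.exp_neg, neg_neg] at h2
    calc Real.exp (a*s) * (Real.Gamma s)⁻¹
        ≤ Real.exp (a*s) * (Real.exp (2*T) * Real.exp (-((|a|+1) * s))) := by
          apply mul_le_mul_of_nonneg_left hGinv (Real.exp_pos _).le
      _ = Real.exp (2*T) * Real.exp (a*s - (|a|+1)*s) := by
          rw [← Real.exp_add, ← Real.exp_add, ← Real.exp_add]; congr 1; ring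
      _ ≤ Real.exp (2*T) * Real.exp (-s) := by
          apply mul_le_mul_of_nonneg_left _ (Real.exp_pos _).le
          apply Real.exp_le_exp.2
          have : a * s ≤ |a| * s := mul_le_mul_of_nonneg_right (le_abs_self a) (by linarith)
          linarith
      _ ≤ _ := by
          apply mul_le_mul_of_nonneg_right _ (Real.exp_pos _).le
          have := Real.exp_pos (|a|+3); linarith

lemma integrable_master {p : ℝ} (a : ℝ) (hp : 0 < p) :
    IntegrableOn (fun s => Real.exp (a*s) * s ^ (p-1) / Real.Gamma s) (Ioi (0:ℝ)) := by
  obtain ⟨c, hc, hbound⟩ := exp_gamma_inv_bound a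
  apply Integrable.mono' (((Real.GammaIntegral_convergent hp).const_mul c))
  · exact (cont_master p a).aestronglyMeasurable measurableSet_Ioi
  · filter_upwards [ae_restrict_mem measurableSet_Ioi] with s hs
    have hs0 : (0:ℝ) < s := hs
    have hnn : 0 ≤ Real.exp (a*s) * s ^ (p-1) / Real.Gamma s := by
      have := (Real.Gamma_pos_of_pos hs0).le
      positivity
    rw [Real.norm_eq_abs, abs_of_nonneg hnn]
    have : Real.exp (a*s) * s ^ (p-1) / Real.Gamma s
        = (Real.exp (a*s) * (Real.Gamma s)⁻¹) * s ^ (p-1) := by ring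
    rw [this]
    calc (Real.exp (a*s) * (Real.Gamma s)⁻¹) * s ^ (p-1)
        ≤ (c * Real.exp (-s)) * s ^ (p-1) := by
          apply mul_le_mul_of_nonneg_right (hbound s hs0) (Real.rpow_nonneg hs0.le _)
      _ = c * (Real.exp (-s) * s ^ (p-1)) := by ring

lemma phi_bound (C : ℝ) : ∃ M > 0, ∀ s : ℝ, 0 ≤ s →
    |Real.exp (-C*s) / Real.Gamma (s+1) - 1| ≤ M * s := by
  set G : ℂ → ℂ := fun z => Complex.exp (-C*z) * (Complex.Gamma (z+1))⁻¹ with hGdef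
  have hG : Differentiable ℂ G := by
    apply Differentiable.mul
    · exact Complex.differentiable_exp.comp ((differentiable_const _).mul differentiable_id)
    · exact Complex.differentiable_one_div_Gamma.comp (differentiable_id.add_const 1)
  have hcd : Continuous (deriv G) := (hG.contDiff (n := 1)).continuous_deriv le_rfl
  have hseg : IsCompact (segment ℝ (0:ℂ) 1) := by
    rw [segment_eq_image]
    exact isCompact_Icc.image
      (((continuous_const.sub continuous_id).smul continuous_const).add
        (continuous_id.smul continuous_const))
  obtain ⟨M0, hM0⟩ := hseg.exists_bound_of_continuousOn (f := deriv G) hcd.continuousOn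
  have hmvt : ∀ z ∈ segment ℝ (0:ℂ) 1, ‖G z - G 0‖ ≤ M0 * ‖z - 0‖ := fun z hz =>
    (convex_segment _ _).norm_image_sub_le_of_norm_deriv_le (fun x _ => hG x) hM0
      (left_mem_segment ℝ (0:ℂ) 1) hz
  have hG0 : G 0 = 1 := by
    simp [hGdef, Complex.Gamma_one]
  have hreal : ∀ s : ℝ, G (s:ℂ) = ((Real.exp (-C*s) / Real.Gamma (s+1) : ℝ) : ℂ) := by
    intro s
    have h1 : ((s:ℂ) + 1) = ((s + 1 : ℝ) : ℂ) := by push_cast; ring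
    have h2 : (-(C:ℂ) * (s:ℂ)) = ((-C * s : ℝ) : ℂ) := by push_cast; ring
    rw [hGdef]
    simp only [h1, h2, Complex.Gamma_ofReal, ← Complex.ofReal_exp]
    rw [div_eq_mul_inv]
    push_cast
    ring
  have hmem : ∀ s : ℝ, s ∈ Icc (0:ℝ) 1 → (s:ℂ) ∈ segment ℝ (0:ℂ) 1 := by
    intro s hs
    exact ⟨1 - s, s, by linarith [hs.2], hs.1, by ring, by simp [Complex.real_smul]⟩
  set T := Real.exp |C| with hTdef
  have hT : 1 ≤ T := Real.one_le_exp (abs_nonneg C)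
  refine ⟨max M0 (Real.exp (2*T) + 1) + 1, by positivity, fun s hs => ?_⟩
  rcases le_or_gt s 1 with h1 | h1
  · -- s ∈ [0,1] : use MVT
    have hz := hmvt (s:ℂ) (hmem s ⟨hs, h1⟩)
    rw [hreal s, hG0] at hz
    have hnorm1 : ‖((Real.exp (-C*s) / Real.Gamma (s+1) : ℝ) : ℂ) - 1‖
        = |Real.exp (-C*s) / Real.Gamma (s+1) - 1| := by
      rw [show (1:ℂ) = ((1:ℝ):ℂ) by norm_num, ← Complex.ofReal_sub, Complex.norm_real,
        Real.norm_eq_abs]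
    have hnorm2 : ‖(s:ℂ) - 0‖ = s := by
      rw [sub_zero, Complex.norm_real, Real.norm_eq_abs, abs_of_nonneg hs]
    rw [hnorm1, hnorm2] at hz
    calc |Real.exp (-C*s) / Real.Gamma (s+1) - 1| ≤ M0 * s := hz
      _ ≤ _ := by
        apply mul_le_mul_of_nonneg_right _ hs
        have := le_max_left M0 (Real.exp (2*T) + 1)
        linarith
  · -- s ≥ 1
    have hs1 : (1:ℝ) ≤ s + 1 := by linarith
    have hGlb : Real.exp (-(2*T)) * T ^ (s+1) ≤ Real.Gamma (s+1) := gamma_lb hT hs1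
    have hTpos : (0:ℝ) < T ^ (s+1) := Real.rpow_pos_of_pos (by linarith) _
    have hGpos : 0 < Real.Gamma (s+1) := Real.Gamma_pos_of_pos (by linarith)
    have hx : Real.exp (-C*s) / Real.Gamma (s+1) ≤ Real.exp (2*T) := by
      rw [div_le_iff₀ hGpos]
      calc Real.exp (-C*s) ≤ Real.exp (2*T) * (Real.exp (-(2*T)) * T ^ (s+1)) := by
            rw [← mul_assoc, ← Real.exp_add]
            have : T ^ (s+1) = Real.exp (|C| * (s+1)) := by
              rw [hTdef, ← Real.exp_mul]
            rw [this, show (2*T + -(2*T)) = 0 by ring, Real.exp_zero, one_mul]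
            apply Real.exp_le_exp.2
            have h2 : -C * s ≤ |C| * s := by
              have := neg_le_abs C
              nlinarith [hs]
            nlinarith [abs_nonneg C, hs]
        _ ≤ Real.exp (2*T) * Real.Gamma (s+1) := by
            apply mul_le_mul_of_nonneg_left hGlb (Real.exp_pos _).le
    have hxnn : 0 ≤ Real.exp (-C*s) / Real.Gamma (s+1) := by positivity
    calc |Real.exp (-C*s) / Real.Gamma (s+1) - 1|
        ≤ Real.exp (2*T) + 1 := by
          rw [abs_sub_le_iff]
          constructor <;> linarith
      _ ≤ (Real.exp (2*T) + 1) * s := by nlinarith [Real.exp_pos (2*T)]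
      _ ≤ _ := by
          apply mul_le_mul_of_nonneg_right _ (by linarith : (0:ℝ) ≤ s)
          have := le_max_right M0 (Real.exp (2*T) + 1)
          linarith

lemma integrable_rpow_exp {p L : ℝ} (hp : 0 < p) (hL : 0 < L) :
    IntegrableOn (fun s => s ^ (p-1) * Real.exp (-(L*s))) (Ioi (0:ℝ)) := by
  have h0 := Real.GammaIntegral_convergent hp
  have h1 : IntegrableOn (fun s => Real.exp (-(L*s)) * (L*s) ^ (p-1)) (Ioi (0:ℝ)) := by
    have h0' : IntegrableOn (fun x => Real.exp (-x) * x ^ (p-1)) (Ioi (L*0)) := by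
      simpa using h0
    exact (integrableOn_Ioi_comp_mul_left_iff
      (fun x => Real.exp (-x) * x ^ (p-1)) 0 hL).2 h0'
  have h2 := h1.const_mul ((L ^ (p-1))⁻¹)
  apply h2.congr
  filter_upwards [ae_restrict_mem measurableSet_Ioi] with s hs
  have hs0 : (0:ℝ) < s := hs
  rw [Real.mul_rpow hL.le hs0.le]
  have hLp : L ^ (p-1) ≠ 0 := (Real.rpow_pos_of_pos hL _).ne'
  field_simp

theorem stmt_9 (β : ℝ) (hβ : 0 < β) (C : ℝ) (E : ℝ → ℝ)
    (hE : ∀ x : ℝ, 0 < x →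
      E x = ∫ s in Ioi (0 : ℝ),
        (1 / Real.Gamma s) * Real.exp (-C * s) * s ^ (β - 1) * x ^ (s - 1)) :
    (∀ ω : ℝ, 0 < ω → ContinuousOn E (Ioc 0 ω)) ∧
    (∃ δ : ℝ, 0 < δ ∧ δ < 1 ∧ ∃ K > (0 : ℝ), ∀ x : ℝ, 0 < x → x < δ →
      |E x - Real.Gamma (β + 1) / (x * |Real.log x| ^ (β + 1))| ≤
        K / (x * |Real.log x| ^ (β + 2))) ∧
    Filter.Tendsto (fun x : ℝ => x * |Real.log x| ^ (β + 1) * E x)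
      (nhdsWithin 0 (Ioi 0)) (nhds (Real.Gamma (β + 1))) := by
  obtain ⟨M, hM0, hM⟩ := phi_bound C
  set I : ℝ → ℝ := fun a => ∫ s in Ioi (0:ℝ), Real.exp (a*s) * s ^ (β-1) / Real.Gamma s
    with hIdef
  -- continuity of I
  have hI_cont : Continuous I := by
    rw [continuous_iff_continuousAt]
    intro a₀
    apply continuousAt_of_dominated (bound := fun s => Real.exp ((|a₀|+1)*s) * s ^ (β-1) / Real.Gamma s)
    · exact Filter.Eventually.of_forall fun a =>
        (cont_master β a).aestronglyMeasurable measurableSet_Ioi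
    · filter_upwards [Metric.ball_mem_nhds a₀ one_pos] with a ha
      filter_upwards [ae_restrict_mem measurableSet_Ioi] with s hs
      have hs0 : (0:ℝ) < s := hs
      have hGpos := Real.Gamma_pos_of_pos hs0
      have hnn : 0 ≤ Real.exp (a*s) * s ^ (β-1) / Real.Gamma s := by positivity
      rw [Real.norm_eq_abs, abs_of_nonneg hnn]
      have ha1 : a ≤ |a₀| + 1 := by
        have h1 := abs_lt.1 (mem_ball_iff_norm.1 ha)
        have h2 := le_abs_self a₀
        linarith [h1.2]
      rw [mul_div_assoc, mul_div_assoc]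
      apply mul_le_mul_of_nonneg_right _ (by positivity)
      exact Real.exp_le_exp.2 (mul_le_mul_of_nonneg_right ha1 hs0.le)
    · exact integrable_master (|a₀|+1) hβ
    · filter_upwards [ae_restrict_mem measurableSet_Ioi] with s hs
      exact (((Real.continuous_exp.comp (continuous_id.mul continuous_const)).mul
        continuous_const).div_const _).continuousAt
  -- E in terms of I
  have hEI : ∀ x : ℝ, 0 < x → E x = x⁻¹ * I (Real.log x - C) := by
    intro x hx
    rw [hE x hx, hIdef]
    rw [← integral_const_mul]
    apply setIntegral_congr_fun measurableSet_Ioi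
    intro s hs
    have hs0 : (0:ℝ) < s := hs
    dsimp only
    have e1 : x ^ (s-1) = Real.exp (Real.log x * s) * x⁻¹ := by
      rw [Real.rpow_def_of_pos hx, mul_sub, mul_one, Real.exp_sub, Real.exp_log hx,
        div_eq_mul_inv]
    have e2 : Real.exp ((Real.log x - C)*s) = Real.exp (Real.log x * s) * Real.exp (-C*s) := by
      rw [← Real.exp_add]; congr 1; ring
    rw [e1, e2]
    ring
  -- key estimate
  have hKey : ∀ L : ℝ, 0 < L →
      |I (-L - C) - Real.Gamma (β+1) * (1/L)^(β+1)| ≤ M * Real.Gamma (β+2) * (1/L)^(β+2) := by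
    intro L hL
    have hval1 : ∫ s in Ioi (0:ℝ), s ^ ((β+1)-1) * Real.exp (-(L*s))
        = (1/L)^(β+1) * Real.Gamma (β+1) :=
      Real.integral_rpow_mul_exp_neg_mul_Ioi (by linarith) hL
    have hval2 : ∫ s in Ioi (0:ℝ), s ^ ((β+2)-1) * Real.exp (-(L*s))
        = (1/L)^(β+2) * Real.Gamma (β+2) :=
      Real.integral_rpow_mul_exp_neg_mul_Ioi (by linarith) hL
    have hint1 : IntegrableOn (fun s => Real.exp ((-L-C)*s) * s ^ (β-1) / Real.Gamma s)
        (Ioi (0:ℝ)) := integrable_master _ hβ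
    have hint2 : IntegrableOn (fun s => s ^ ((β+1)-1) * Real.exp (-(L*s))) (Ioi (0:ℝ)) :=
      integrable_rpow_exp (by linarith) hL
    have hsub : I (-L - C) - Real.Gamma (β+1) * (1/L)^(β+1)
        = ∫ s in Ioi (0:ℝ), (Real.exp ((-L-C)*s) * s ^ (β-1) / Real.Gamma s
            - s ^ ((β+1)-1) * Real.exp (-(L*s))) := by
      rw [integral_sub hint1 hint2, hval1, hIdef]
      ring
    rw [hsub]
    have hbd : ‖∫ s in Ioi (0:ℝ), (Real.exp ((-L-C)*s) * s ^ (β-1) / Real.Gamma s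
        - s ^ ((β+1)-1) * Real.exp (-(L*s)))‖
        ≤ ∫ s in Ioi (0:ℝ), M * (s ^ ((β+2)-1) * Real.exp (-(L*s))) := by
      apply norm_integral_le_of_norm_le ((integrable_rpow_exp (by linarith) hL).const_mul M)
      filter_upwards [ae_restrict_mem measurableSet_Ioi] with s hs
      have hs0 : (0:ℝ) < s := hs
      have hGpos := Real.Gamma_pos_of_pos hs0
      have hG1 : Real.Gamma (s+1) = s * Real.Gamma s := Real.Gamma_add_one hs0.ne'
      have hG1pos : 0 < Real.Gamma (s+1) := Real.Gamma_pos_of_pos (by linarith)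
      have heq : Real.exp ((-L-C)*s) * s ^ (β-1) / Real.Gamma s
          - s ^ ((β+1)-1) * Real.exp (-(L*s))
          = (Real.exp (-(L*s)) * s ^ ((β+1)-1)) * (Real.exp (-C*s) / Real.Gamma (s+1) - 1) := by
        have e1 : Real.exp ((-L-C)*s) = Real.exp (-(L*s)) * Real.exp (-C*s) := by
          rw [← Real.exp_add]; congr 1; ring
        have e2 : s ^ ((β+1)-1) = s ^ (β-1) * s := by
          rw [show (β+1)-1 = (β-1)+1 by ring, Real.rpow_add_one hs0.ne']
        rw [e1, e2, hG1]
        have h1 : Real.Gamma s ≠ 0 := hGpos.ne'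
        field_simp
      rw [heq]
      have hnn1 : 0 ≤ Real.exp (-(L*s)) * s ^ ((β+1)-1) := by positivity
      rw [Real.norm_eq_abs, abs_mul, abs_of_nonneg hnn1]
      calc (Real.exp (-(L*s)) * s ^ ((β+1)-1)) * |Real.exp (-C*s) / Real.Gamma (s+1) - 1|
          ≤ (Real.exp (-(L*s)) * s ^ ((β+1)-1)) * (M * s) :=
            mul_le_mul_of_nonneg_left (hM s hs0.le) hnn1
        _ = M * (s ^ ((β+2)-1) * Real.exp (-(L*s))) := by
            rw [show (β+2)-1 = ((β+1)-1)+1 by ring, Real.rpow_add_one hs0.ne']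
            ring
    rw [← Real.norm_eq_abs]
    refine hbd.trans (le_of_eq ?_)
    rw [integral_const_mul, hval2]; ring
  -- quantitative bound, reusable
  have hquant : ∀ x : ℝ, 0 < x → x < 1/2 →
      |E x - Real.Gamma (β + 1) / (x * |Real.log x| ^ (β + 1))| ≤
        (M * Real.Gamma (β+2)) / (x * |Real.log x| ^ (β + 2)) := by
    intro x hx0 hxlt
    have hlog : Real.log x < 0 := Real.log_neg hx0 (by linarith)
    set L : ℝ := -Real.log x with hLdef
    have hL : 0 < L := by simp [hLdef]; linarith
    have habs : |Real.log x| = L := abs_of_neg hlog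
    have hEx : E x = x⁻¹ * I (-L - C) := by
      rw [hEI x hx0]; congr 1; rw [hLdef]; ring_nf
    have e3 : Real.Gamma (β+1) / (x * |Real.log x| ^ (β+1))
        = x⁻¹ * (Real.Gamma (β+1) * (1/L)^(β+1)) := by
      rw [habs, one_div, Real.inv_rpow hL.le]
      field_simp
    rw [hEx, e3, ← mul_sub, abs_mul, abs_of_nonneg (inv_nonneg.2 hx0.le)]
    calc x⁻¹ * |I (-L - C) - Real.Gamma (β+1) * (1/L)^(β+1)|
        ≤ x⁻¹ * (M * Real.Gamma (β+2) * (1/L)^(β+2)) :=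
          mul_le_mul_of_nonneg_left (hKey L hL) (inv_nonneg.2 hx0.le)
      _ = (M * Real.Gamma (β+2)) / (x * |Real.log x| ^ (β+2)) := by
          rw [habs, one_div, Real.inv_rpow hL.le, div_eq_mul_inv, mul_inv]
          ring
  refine ⟨?_, ?_, ?_⟩
  · -- continuity
    intro ω hω x hx
    have hx0 : 0 < x := hx.1
    have hcongr : E =ᶠ[nhds x] fun y => y⁻¹ * I (Real.log y - C) := by
      filter_upwards [Ioi_mem_nhds hx0] with y hy using hEI y hy
    have hca : ContinuousAt (fun y => y⁻¹ * I (Real.log y - C)) x := by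
      apply ContinuousAt.mul
      · exact continuousAt_inv₀ hx0.ne'
      · exact hI_cont.continuousAt.comp ((Real.continuousAt_log hx0.ne').sub continuousAt_const)
    exact (hca.congr hcongr.symm).continuousWithinAt
  · exact ⟨1/2, by norm_num, by norm_num, M * Real.Gamma (β+2),
      by have := Real.Gamma_pos_of_pos (show (0:ℝ) < β + 2 by linarith); positivity,
      hquant⟩
  · -- tendsto
    have hev : ∀ᶠ x in nhdsWithin (0:ℝ) (Ioi 0),
        ‖x * |Real.log x| ^ (β+1) * E x - Real.Gamma (β+1)‖
          ≤ (M * Real.Gamma (β+2)) / (-Real.log x) := by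
      filter_upwards [Ioo_mem_nhdsGT (by norm_num : (0:ℝ) < 1/2)] with x hx
      have hx0 : 0 < x := hx.1
      have hxlt : x < 1/2 := hx.2
      have hlog : Real.log x < 0 := Real.log_neg hx0 (by linarith)
      set L : ℝ := -Real.log x with hLdef
      have hL : 0 < L := by simp [hLdef]; linarith
      have habs : |Real.log x| = L := abs_of_neg hlog
      have hLpow : (0:ℝ) < L ^ (β+1) := Real.rpow_pos_of_pos hL _
      have hxL : x * L ^ (β+1) ≠ 0 := by positivity
      have heq : x * |Real.log x| ^ (β+1) * E x - Real.Gamma (β+1)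
          = (x * L ^ (β+1)) * (E x - Real.Gamma (β+1) / (x * |Real.log x| ^ (β+1))) := by
        rw [habs, mul_sub, mul_div_cancel₀ _ hxL]
      rw [heq, Real.norm_eq_abs, abs_mul, abs_of_nonneg (by positivity : (0:ℝ) ≤ x * L ^ (β+1))]
      calc (x * L ^ (β+1)) * |E x - Real.Gamma (β+1) / (x * |Real.log x| ^ (β+1))|
          ≤ (x * L ^ (β+1)) * ((M * Real.Gamma (β+2)) / (x * |Real.log x| ^ (β+2))) :=
            mul_le_mul_of_nonneg_left (hquant x hx0 hxlt) (by positivity)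
        _ = (M * Real.Gamma (β+2)) / L := by
            have hsplit : L ^ (β+2) = L ^ (β+1) * L := by
              rw [show β+2 = (β+1)+1 by ring, Real.rpow_add_one hL.ne']
            rw [habs, hsplit,
              show x * (L^(β+1) * L) = (x * L^(β+1)) * L by ring,
              ← mul_div_assoc, mul_div_mul_left _ _ hxL]
    have hLtop : Filter.Tendsto (fun x : ℝ => -Real.log x) (nhdsWithin 0 (Ioi 0)) Filter.atTop :=
      Filter.tendsto_neg_atTop_iff.mpr Real.tendsto_log_nhdsGT_zero
    have hratio : Filter.Tendsto (fun x : ℝ => (M * Real.Gamma (β+2)) / (-Real.log x))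
        (nhdsWithin 0 (Ioi 0)) (nhds 0) := Filter.Tendsto.div_atTop tendsto_const_nhds hLtop
    have := squeeze_zero_norm' hev hratio
    exact tendsto_sub_nhds_zero_iff.mp this
end

section
/- Fix ω > 0. Let s : (0,ω) → ℂ satisfy s ∈ L²(0,ω), s differentiable on (0,ω), and x^{1/2}·s′(x) ∈ L¹(0,ω). Let T be a bounded operator on L²(0,ω) such that for every f ∈ L²(0,ω), (Tf)(x) = (d/dx)∫₀ˣ s(x−t)f(t)dt for almost every x. Define s̃₁(ξ) = ∫₀^ω e^{itξ} s(t)(1 − t/ω) dt. Suppose there exist two distinct complex numbers β₁ ≠ β₂ such that each β_j is a limit of −iξ_k·s̃₁(ξ_k) along some real sequence (ξ_k) with ξ_k → +∞ or ξ_k → −∞. Then there is no essentially bounded measurable function φ : (0,ω) → ℂ and no compact operator V on L²(0,ω) such that (Tf)(x) = φ(x)f(x) + (Vf)(x) for all f ∈ L²(0,ω). -/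
open MeasureTheory Set Filter Complex Topology
open scoped ENNReal NNReal
set_option maxHeartbeats 1000000 in

/-- Riemann-Lebesgue along a sequence tending to ±∞. -/
lemma aux_RL (g : ℝ → ℂ) (ξ : ℕ → ℝ)
    (hξ : Tendsto ξ atTop atTop ∨ Tendsto ξ atTop atBot) :
    Tendsto (fun k => ∫ t : ℝ, Complex.exp (Complex.I * (ξ k) * t) * g t) atTop (𝓝 0) := by
  have hw : Tendsto (fun k => -ξ k / (2 * Real.pi)) atTop (cocompact ℝ) := by
    rw [cocompact_eq_atBot_atTop]
    rcases hξ with h | h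
    · exact (Tendsto.atBot_div_const (by positivity) (tendsto_neg_atBot_iff.2 h)).mono_right
        le_sup_left
    · exact (Tendsto.atTop_div_const (by positivity) (tendsto_neg_atTop_iff.2 h)).mono_right
        le_sup_right
  have := (Real.tendsto_integral_exp_smul_cocompact g).comp hw
  convert this using 2 with k
  refine integral_congr_ae (Eventually.of_forall fun t => ?_)
  simp only [smul_eq_mul, Real.fourierChar_apply]
  congr 2
  have hπ : Real.pi ≠ 0 := Real.pi_ne_zero
  have hπ' : (Real.pi : ℂ) ≠ 0 := by exact_mod_cast hπ
  push_cast
  field_simp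

lemma aux_RL_set (ω : ℝ) (g : ℝ → ℂ) (ξ : ℕ → ℝ)
    (hξ : Tendsto ξ atTop atTop ∨ Tendsto ξ atTop atBot) :
    Tendsto (fun k => ∫ t in Ioo (0:ℝ) ω, Complex.exp (Complex.I * (ξ k) * t) * g t)
      atTop (𝓝 0) := by
  have := aux_RL ((Ioo (0:ℝ) ω).indicator g) ξ hξ
  convert this using 2 with k
  rw [← integral_indicator measurableSet_Ioo]
  congr 1
  ext t
  by_cases ht : t ∈ Ioo (0:ℝ) ω <;> simp [Set.indicator_apply, ht]

section Main
variable {ω : ℝ}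

lemma aux_finite (hω : 0 < ω) : IsFiniteMeasure (volume.restrict (Ioo (0:ℝ) ω)) := by
  constructor
  rw [Measure.restrict_apply_univ, Real.volume_Ioo]
  exact ENNReal.ofReal_lt_top

lemma aux_norm_exp (ξ x : ℝ) : ‖Complex.exp (-(Complex.I * ξ * x))‖ = 1 := by
  rw [Complex.norm_exp]
  simp

lemma aux_memL2_exp (hω : 0 < ω) (ξ : ℝ) :
    MemLp (fun x : ℝ => Complex.exp (-(Complex.I * ξ * x))) 2
      (volume.restrict (Ioo 0 ω)) := by
  haveI := aux_finite hω
  refine MemLp.mono_exponent (q := ⊤) ?_ le_top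
  refine memLp_top_of_bound ?_ 1 (Eventually.of_forall fun x => le_of_eq (aux_norm_exp ξ x))
  exact (Continuous.aestronglyMeasurable (by continuity))

variable {s : ℝ → ℂ}

/-- kernel times exponential -/
noncomputable def hfun (s : ℝ → ℂ) (ξ : ℝ) : ℝ → ℂ := fun t => Complex.exp (Complex.I * t * ξ) * s t

lemma aux_sInt (hω : 0 < ω) (hsL2 : MemLp s 2 (volume.restrict (Ioo 0 ω))) :
    IntegrableOn s (Ioo 0 ω) := by
  haveI := aux_finite hω
  exact hsL2.integrable (by norm_num)

lemma aux_hInt (hω : 0 < ω) (hsL2 : MemLp s 2 (volume.restrict (Ioo 0 ω))) (ξ : ℝ) :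
    IntegrableOn (hfun s ξ) (Ioo 0 ω) := by
  refine Integrable.bdd_mul (aux_sInt hω hsL2) ?_ (c := 1) (Eventually.of_forall fun t => ?_)
  · exact (Continuous.aestronglyMeasurable (by continuity))
  · rw [Complex.norm_exp]
    simp [mul_comm, Complex.mul_re]

lemma aux_hII (hω : 0 < ω) (hsL2 : MemLp s 2 (volume.restrict (Ioo 0 ω))) (ξ : ℝ)
    {x : ℝ} (hx0 : 0 ≤ x) (hxω : x ≤ ω) : IntervalIntegrable (hfun s ξ) volume 0 x := by
  rw [intervalIntegrable_iff_integrableOn_Ioo_of_le hx0]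
  exact (aux_hInt hω hsL2 ξ).mono_set (Ioo_subset_Ioo le_rfl hxω)

/-- the primitive -/
noncomputable def Gfun (s : ℝ → ℂ) (ξ : ℝ) : ℝ → ℂ := fun x => ∫ t in (0:ℝ)..x, hfun s ξ t

lemma aux_G_cont (hω : 0 < ω) (hsL2 : MemLp s 2 (volume.restrict (Ioo 0 ω))) (ξ : ℝ) :
    ContinuousOn (Gfun s ξ) (Icc 0 ω) := by
  have h := intervalIntegral.continuousOn_primitive_interval' (a := 0)
    (aux_hII hω hsL2 ξ hω.le le_rfl) left_mem_uIcc
  rwa [uIcc_of_le hω.le] at h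

lemma aux_G_deriv (hω : 0 < ω) (hsL2 : MemLp s 2 (volume.restrict (Ioo 0 ω)))
    (hsdiff : ∀ x ∈ Ioo (0 : ℝ) ω, DifferentiableAt ℝ s x) (ξ : ℝ)
    {x : ℝ} (hx : x ∈ Ioo (0:ℝ) ω) :
    HasDerivAt (Gfun s ξ) (hfun s ξ x) x := by
  have hcontOn : ContinuousOn (hfun s ξ) (Ioo 0 ω) := by
    intro y hy
    exact ((Continuous.continuousAt (by continuity)).mul
      ((hsdiff y hy).continuousAt)).continuousWithinAt
  refine intervalIntegral.integral_hasDerivAt_right (aux_hII hω hsL2 ξ hx.1.le hx.2.le)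
    (hcontOn.stronglyMeasurableAtFilter isOpen_Ioo x hx) ?_
  exact ((Continuous.continuousAt (by continuity)).mul ((hsdiff x hx).continuousAt))

/-- the exponential test function -/
noncomputable def eN (ξ : ℝ) : ℝ → ℂ := fun x => Complex.exp (-(Complex.I * ξ * x))

lemma aux_subst (hω : 0 < ω) (hsL2 : MemLp s 2 (volume.restrict (Ioo 0 ω))) (ξ : ℝ)
    {u : ℝ} (hu : u ∈ Ioo (0:ℝ) ω) :
    ∫ t in Ioo (0:ℝ) u, s (u - t) * eN ξ t = eN ξ u * Gfun s ξ u := by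
  have h1 : ∫ t in Ioo (0:ℝ) u, s (u - t) * eN ξ t
      = ∫ t in (0:ℝ)..u, s (u - t) * eN ξ t := by
    rw [intervalIntegral.integral_of_le hu.1.le, integral_Ioc_eq_integral_Ioo]
  rw [h1]
  have h2 : ∀ t : ℝ, s (u - t) * eN ξ t = (fun v => s v * eN ξ (u - v)) (u - t) := by
    intro t; simp only []; rw [sub_sub_cancel]
  rw [intervalIntegral.integral_congr (g := fun t => (fun v => s v * eN ξ (u - v)) (u - t))
    (fun t _ => h2 t)]
  rw [intervalIntegral.integral_comp_sub_left (fun v => s v * eN ξ (u - v)) u]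
  rw [sub_self, sub_zero]
  have h3 : ∀ v : ℝ, s v * eN ξ (u - v) = eN ξ u * hfun s ξ v := by
    intro v
    simp only [eN, hfun]
    have e1 : Complex.exp (-(Complex.I * ξ * ((u - v : ℝ) : ℂ)))
        = Complex.exp (-(Complex.I * ξ * u)) * Complex.exp (Complex.I * v * ξ) := by
      rw [← Complex.exp_add]; congr 1; push_cast; ring
    rw [e1]; ring
  rw [intervalIntegral.integral_congr (fun v _ => h3 v), intervalIntegral.integral_const_mul]
  rfl

lemma aux_eN_deriv (ξ x : ℝ) :
    HasDerivAt (eN ξ) (-(Complex.I * ξ) * eN ξ x) x := by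
  have h0 : HasDerivAt (fun u : ℝ => (u : ℂ)) 1 x :=
    HasDerivAt.ofReal_comp (hasDerivAt_id x)
  have h1 : HasDerivAt (fun u : ℝ => -(Complex.I * ξ) * (u : ℂ)) (-(Complex.I * ξ)) x := by
    simpa using h0.const_mul (-(Complex.I * (ξ:ℂ)))
  have h2 := h1.cexp
  have : (fun u : ℝ => Complex.exp (-(Complex.I * ξ) * (u : ℂ))) = eN ξ := by
    ext u; simp only [eN]; ring_nf
  rw [this] at h2
  convert h2 using 1
  simp only [eN]
  ring_nf

lemma aux_Fderiv (hω : 0 < ω) (hsL2 : MemLp s 2 (volume.restrict (Ioo 0 ω)))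
    (hsdiff : ∀ x ∈ Ioo (0 : ℝ) ω, DifferentiableAt ℝ s x) (ξ : ℝ) (f : ℝ → ℂ)
    (hcoe : f =ᵐ[volume.restrict (Ioo 0 ω)] eN ξ) {x : ℝ} (hx : x ∈ Ioo (0:ℝ) ω) :
    HasDerivAt (fun u : ℝ => ∫ t in Ioo (0:ℝ) u, s (u - t) * f t)
      (-(Complex.I * ξ) * eN ξ x * Gfun s ξ x + s x) x := by
  have hprod : HasDerivAt (fun u : ℝ => eN ξ u * Gfun s ξ u)
      (-(Complex.I * ξ) * eN ξ x * Gfun s ξ x + s x) x := by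
    have h : HasDerivAt (fun u : ℝ => eN ξ u * Gfun s ξ u) _ x := (aux_eN_deriv ξ x).mul (aux_G_deriv hω hsL2 hsdiff ξ hx)
    convert h using 1
    have hcancel : eN ξ x * hfun s ξ x = s x := by
      simp only [eN, hfun]
      rw [← mul_assoc, ← Complex.exp_add]
      have : -(Complex.I * ξ * x) + Complex.I * x * ξ = 0 := by ring
      rw [this, Complex.exp_zero, one_mul]
    rw [hcancel]
  have hev : (fun u : ℝ => ∫ t in Ioo (0:ℝ) u, s (u - t) * f t)
      =ᶠ[nhds x] (fun u : ℝ => eN ξ u * Gfun s ξ u) := by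
    filter_upwards [isOpen_Ioo.mem_nhds hx] with u hu
    rw [← aux_subst hω hsL2 ξ hu]
    refine integral_congr_ae ?_
    have h' : f =ᵐ[volume.restrict (Ioo 0 u)] eN ξ :=
      ae_restrict_of_ae_restrict_of_subset (Ioo_subset_Ioo le_rfl hu.2.le) hcoe
    filter_upwards [h'] with t ht
    rw [ht]
  exact hprod.congr_of_eventuallyEq hev

lemma aux_G_int (hω : 0 < ω) (hsL2 : MemLp s 2 (volume.restrict (Ioo 0 ω))) (ξ : ℝ) :
    IntegrableOn (Gfun s ξ) (Ioo 0 ω) :=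
  ((aux_G_cont hω hsL2 ξ).integrableOn_compact isCompact_Icc).mono_set Ioo_subset_Icc_self

lemma aux_xh_int (hω : 0 < ω) (hsL2 : MemLp s 2 (volume.restrict (Ioo 0 ω))) (ξ : ℝ) :
    IntegrableOn (fun x : ℝ => ((x : ℂ) - (ω : ℂ)) * hfun s ξ x) (Ioo 0 ω) := by
  refine Integrable.bdd_mul (c := ω) (aux_hInt hω hsL2 ξ)
    (Continuous.aestronglyMeasurable (by continuity)) ?_
  filter_upwards [ae_restrict_mem measurableSet_Ioo] with x hx
  rw [show ((x:ℂ) - ω) = ((x - ω : ℝ) : ℂ) by push_cast; ring, Complex.norm_real,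
    Real.norm_eq_abs]
  rw [abs_sub_comm, _root_.abs_of_nonneg (by linarith [hx.1, hx.2] : (0:ℝ) ≤ ω - x)]
  linarith [hx.1]

lemma aux_parts (hω : 0 < ω) (hsL2 : MemLp s 2 (volume.restrict (Ioo 0 ω)))
    (hsdiff : ∀ x ∈ Ioo (0 : ℝ) ω, DifferentiableAt ℝ s x) (ξ : ℝ) :
    ∫ x in Ioo (0:ℝ) ω, Gfun s ξ x
      = ∫ x in Ioo (0:ℝ) ω, ((ω : ℂ) - (x : ℂ)) * hfun s ξ x := by
  set P : ℝ → ℂ := fun x => ((x : ℂ) - (ω : ℂ)) * Gfun s ξ x with hPdef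
  have hP : ∀ x ∈ Ioo (0:ℝ) ω, HasDerivAt P
      (Gfun s ξ x + ((x : ℂ) - (ω : ℂ)) * hfun s ξ x) x := by
    intro x hx
    have h0 : HasDerivAt (fun u : ℝ => ((u : ℂ) - (ω : ℂ))) 1 x := by
      simpa using (HasDerivAt.ofReal_comp (hasDerivAt_id x)).sub_const (ω : ℂ)
    have : HasDerivAt (fun u : ℝ => ((u : ℂ) - (ω : ℂ)) * Gfun s ξ u) _ x := h0.mul (aux_G_deriv hω hsL2 hsdiff ξ hx)
    simpa [one_mul] using this
  have hPc : ContinuousOn P (Icc 0 ω) :=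
    (Continuous.continuousOn (by continuity)).mul (aux_G_cont hω hsL2 ξ)
  have hiG : IntervalIntegrable (Gfun s ξ) volume 0 ω := by
    apply ContinuousOn.intervalIntegrable
    rw [uIcc_of_le hω.le]
    exact aux_G_cont hω hsL2 ξ
  have hixh : IntervalIntegrable (fun x : ℝ => ((x : ℂ) - (ω : ℂ)) * hfun s ξ x) volume 0 ω := by
    rw [intervalIntegrable_iff_integrableOn_Ioo_of_le hω.le]
    exact aux_xh_int hω hsL2 ξ
  have hFTC := intervalIntegral.integral_eq_sub_of_hasDerivAt_of_le hω.le hPc hP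
    (hiG.add hixh)
  rw [intervalIntegral.integral_add hiG hixh] at hFTC
  have hP0 : P 0 = 0 := by
    simp [hPdef, Gfun, intervalIntegral.integral_same]
  have hPω : P ω = 0 := by simp [hPdef]
  rw [hP0, hPω, sub_zero] at hFTC
  have h2 : ∫ x in (0:ℝ)..ω, Gfun s ξ x
      = - ∫ x in (0:ℝ)..ω, ((x : ℂ) - (ω : ℂ)) * hfun s ξ x :=
    eq_neg_of_add_eq_zero_left hFTC
  have h3 : - ∫ x in (0:ℝ)..ω, ((x : ℂ) - (ω : ℂ)) * hfun s ξ x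
      = ∫ x in (0:ℝ)..ω, ((ω : ℂ) - (x : ℂ)) * hfun s ξ x := by
    rw [← intervalIntegral.integral_neg]
    exact intervalIntegral.integral_congr (fun x _ => by ring)
  rw [h3] at h2
  rw [intervalIntegral.integral_of_le hω.le, integral_Ioc_eq_integral_Ioo,
    intervalIntegral.integral_of_le hω.le, integral_Ioc_eq_integral_Ioo] at h2
  exact h2

/-- the pointwise formula for `T fξ` -/
noncomputable def Dfun (s : ℝ → ℂ) (ω ξ : ℝ) : ℝ → ℂ :=
  fun x => -(Complex.I * ξ) * eN ξ x * Gfun s ξ x + s x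

lemma aux_keyint (hω : 0 < ω) (hsL2 : MemLp s 2 (volume.restrict (Ioo 0 ω)))
    (hsdiff : ∀ x ∈ Ioo (0 : ℝ) ω, DifferentiableAt ℝ s x) (ξ : ℝ) :
    ∫ x in Ioo (0:ℝ) ω, Complex.exp (Complex.I * x * ξ) * Dfun s ω ξ x
      = (ω : ℂ) * ((-Complex.I * ξ) *
          ∫ t in Ioo (0:ℝ) ω, Complex.exp (Complex.I * t * ξ) * s t * (1 - t / ω))
        + ∫ t in Ioo (0:ℝ) ω, hfun s ξ t := by
  have hpt : ∀ x : ℝ, Complex.exp (Complex.I * x * ξ) * Dfun s ω ξ x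
      = -(Complex.I * ξ) * Gfun s ξ x + hfun s ξ x := by
    intro x
    simp only [Dfun, eN, hfun]
    have hc : Complex.exp (Complex.I * x * ξ) * Complex.exp (-(Complex.I * ξ * x)) = 1 := by
      rw [← Complex.exp_add]
      have : Complex.I * x * ξ + -(Complex.I * ξ * x) = 0 := by ring
      rw [this, Complex.exp_zero]
    calc Complex.exp (Complex.I * x * ξ) *
          (-(Complex.I * ξ) * Complex.exp (-(Complex.I * ξ * x)) * Gfun s ξ x + s x)
        = (Complex.exp (Complex.I * x * ξ) * Complex.exp (-(Complex.I * ξ * x))) *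
            (-(Complex.I * ξ)) * Gfun s ξ x + Complex.exp (Complex.I * x * ξ) * s x := by ring
      _ = -(Complex.I * ξ) * Gfun s ξ x + Complex.exp (Complex.I * x * ξ) * s x := by
          rw [hc]; ring
  rw [integral_congr_ae (Eventually.of_forall (fun x => hpt x))]
  rw [integral_add ((aux_G_int hω hsL2 ξ).const_mul _) (aux_hInt hω hsL2 ξ)]
  congr 1
  rw [MeasureTheory.integral_const_mul, aux_parts hω hsL2 hsdiff ξ]
  have hω' : (ω : ℂ) ≠ 0 := Complex.ofReal_ne_zero.mpr hω.ne'
  rw [show ∀ a b c : ℂ, a * (b * c) = b * (a * c) from fun a b c => by ring]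
  rw [show (-Complex.I * (ξ:ℂ)) = -(Complex.I * ξ) by ring]
  congr 1
  rw [← MeasureTheory.integral_const_mul]
  refine integral_congr_ae (Eventually.of_forall fun t => ?_)
  simp only [hfun]
  field_simp

lemma aux_RL_set' (ω : ℝ) (g : ℝ → ℂ) (ξ : ℕ → ℝ)
    (hξ : Tendsto ξ atTop atTop ∨ Tendsto ξ atTop atBot) :
    Tendsto (fun k => ∫ t in Ioo (0:ℝ) ω, Complex.exp (Complex.I * t * (ξ k)) * g t)
      atTop (𝓝 0) := by
  convert aux_RL_set ω g ξ hξ using 2 with k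
  refine integral_congr_ae (Eventually.of_forall fun t => ?_)
  ring_nf

lemma aux_RL_eN (ω : ℝ) (g : ℝ → ℂ) (ξ : ℕ → ℝ)
    (hξ : Tendsto ξ atTop atTop ∨ Tendsto ξ atTop atBot) :
    Tendsto (fun k => ∫ t in Ioo (0:ℝ) ω, g t * eN (ξ k) t) atTop (𝓝 0) := by
  have hξ' : Tendsto (fun k => -ξ k) atTop atTop ∨ Tendsto (fun k => -ξ k) atTop atBot := by
    rcases hξ with h | h
    · exact Or.inr (tendsto_neg_atBot_iff.2 h)
    · exact Or.inl (tendsto_neg_atTop_iff.2 h)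
  have := aux_RL_set ω g (fun k => -ξ k) hξ'
  convert this using 2 with k
  refine integral_congr_ae (Eventually.of_forall fun t => ?_)
  simp only [eN]
  rw [mul_comm]
  congr 1
  push_cast
  ring

end Main

theorem stmt_17 (ω : ℝ) (hω : 0 < ω) (s : ℝ → ℂ)
    (hsL2 : MemLp s 2 (volume.restrict (Ioo 0 ω)))
    (hsdiff : ∀ x ∈ Ioo (0 : ℝ) ω, DifferentiableAt ℝ s x)
    (hsder : IntegrableOn (fun x : ℝ => Real.sqrt x • deriv s x) (Ioo 0 ω) volume)
    (T : Lp ℂ 2 (volume.restrict (Ioo 0 ω)) →L[ℂ] Lp ℂ 2 (volume.restrict (Ioo 0 ω)))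
    (hT : ∀ f : Lp ℂ 2 (volume.restrict (Ioo 0 ω)),
      ∀ᵐ x ∂(volume.restrict (Ioo 0 ω)),
        HasDerivAt (fun u : ℝ => ∫ t in Ioo (0 : ℝ) u, s (u - t) * f t) (T f x) x)
    (β₁ β₂ : ℂ) (hβne : β₁ ≠ β₂)
    (hβ : ∀ β ∈ ({β₁, β₂} : Set ℂ), ∃ ξ : ℕ → ℝ,
      (Tendsto ξ atTop atTop ∨ Tendsto ξ atTop atBot) ∧
      Tendsto
        (fun k : ℕ => (-Complex.I * ξ k) *
          ∫ t in Ioo (0 : ℝ) ω, Complex.exp (Complex.I * t * (ξ k)) * s t * (1 - t / ω))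
        atTop (nhds β)) :
    ¬ ∃ (φ : ℝ → ℂ) (V : Lp ℂ 2 (volume.restrict (Ioo 0 ω)) →L[ℂ]
        Lp ℂ 2 (volume.restrict (Ioo 0 ω))),
      MemLp φ ⊤ (volume.restrict (Ioo 0 ω)) ∧ IsCompactOperator (⇑V) ∧
      ∀ f : Lp ℂ 2 (volume.restrict (Ioo 0 ω)),
        (⇑(T f) : ℝ → ℂ) =ᵐ[volume.restrict (Ioo 0 ω)]
          fun x : ℝ => φ x * f x + V f x := by
  rintro ⟨φ, V, hφmem, hVc, hdec⟩
  haveI : IsFiniteMeasure (volume.restrict (Ioo (0:ℝ) ω)) := aux_finite hω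
  classical
  -- the family of exponential test functions in L²
  set F : ℝ → Lp ℂ 2 (volume.restrict (Ioo (0:ℝ) ω)) :=
    fun ξ => (aux_memL2_exp hω ξ).toLp (eN ξ) with hFdef
  have hFcoe : ∀ ξ : ℝ, ⇑(F ξ) =ᵐ[volume.restrict (Ioo (0:ℝ) ω)] eN ξ :=
    fun ξ => (aux_memL2_exp hω ξ).coeFn_toLp
  set M : ℝ := (measureUnivNNReal (volume.restrict (Ioo (0:ℝ) ω)) : ℝ) ^
      ((2 : ℝ≥0∞).toReal)⁻¹ * 1 with hMdef
  have hFnorm : ∀ ξ : ℝ, ‖F ξ‖ ≤ M := by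
    intro ξ
    refine Lp.norm_le_of_ae_bound zero_le_one ?_
    filter_upwards [hFcoe ξ] with x hx
    rw [hx]
    exact le_of_eq (aux_norm_exp ξ x)
  -- pointwise description of T (F ξ)
  have hTD : ∀ ξ : ℝ, ⇑(T (F ξ)) =ᵐ[volume.restrict (Ioo (0:ℝ) ω)] Dfun s ω ξ := by
    intro ξ
    filter_upwards [hT (F ξ), ae_restrict_mem measurableSet_Ioo] with x h1 h2
    exact h1.unique (aux_Fderiv hω hsL2 hsdiff ξ _ (hFcoe ξ) h2)
  -- first evaluation of the quadratic form
  set σ : ℝ → ℂ := fun ξ => (-Complex.I * ξ) *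
      ∫ t in Ioo (0:ℝ) ω, Complex.exp (Complex.I * t * ξ) * s t * (1 - t / ω) with hσdef
  set R : ℝ → ℂ := fun ξ => ∫ t in Ioo (0:ℝ) ω, hfun s ξ t with hRdef
  have hconj : ∀ ξ : ℝ, ∀ x : ℝ, (starRingEnd ℂ) (eN ξ x) = Complex.exp (Complex.I * x * ξ) := by
    intro ξ x
    simp only [eN]
    rw [← Complex.exp_conj]
    congr 1
    simp [Complex.conj_I]
    ring
  have hinner1 : ∀ ξ : ℝ, (inner ℂ (F ξ) (T (F ξ))) = (ω : ℂ) * σ ξ + R ξ := by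
    intro ξ
    rw [MeasureTheory.L2.inner_def]
    have : ∫ x, (inner ℂ (F ξ x) (T (F ξ) x)) ∂(volume.restrict (Ioo (0:ℝ) ω))
        = ∫ x in Ioo (0:ℝ) ω, Complex.exp (Complex.I * x * ξ) * Dfun s ω ξ x := by
      refine integral_congr_ae ?_
      filter_upwards [hFcoe ξ, hTD ξ] with x h1 h2
      rw [RCLike.inner_apply', h1, h2, hconj]
    rw [this, aux_keyint hω hsL2 hsdiff ξ]
  -- second evaluation of the quadratic form
  set A : ℂ := ∫ x in Ioo (0:ℝ) ω, φ x with hAdef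
  have hφint : Integrable φ (volume.restrict (Ioo (0:ℝ) ω)) := hφmem.integrable le_top
  have hinner2 : ∀ ξ : ℝ, (inner ℂ (F ξ) (T (F ξ))) = A + (inner ℂ (F ξ) (V (F ξ))) := by
    intro ξ
    rw [MeasureTheory.L2.inner_def, MeasureTheory.L2.inner_def]
    have heq : (fun x => (inner ℂ (F ξ x) (T (F ξ) x)))
        =ᵐ[volume.restrict (Ioo (0:ℝ) ω)]
          (fun x => φ x + (inner ℂ (F ξ x) (V (F ξ) x))) := by
      filter_upwards [hFcoe ξ, hdec (F ξ)] with x h1 h2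
      rw [RCLike.inner_apply', RCLike.inner_apply', h2]
      have hx1 : (starRingEnd ℂ) (F ξ x) * F ξ x = 1 := by
        rw [h1, Complex.conj_mul']
        norm_cast
        rw [show ‖eN ξ x‖ = 1 from aux_norm_exp ξ x]
        norm_num
      calc (starRingEnd ℂ) (F ξ x) * (φ x * F ξ x + V (F ξ) x)
          = φ x * ((starRingEnd ℂ) (F ξ x) * F ξ x)
            + (starRingEnd ℂ) (F ξ x) * V (F ξ) x := by ring
        _ = φ x + (starRingEnd ℂ) (F ξ x) * V (F ξ) x := by rw [hx1]; ring
    rw [integral_congr_ae heq, integral_add hφint ?hb]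
    case hb =>
      have := MeasureTheory.L2.integrable_inner (𝕜 := ℂ) (F ξ) (V (F ξ))
      simpa using this
  -- weak convergence of the test family
  have hweak : ∀ (g : Lp ℂ 2 (volume.restrict (Ioo (0:ℝ) ω))) (ξ : ℕ → ℝ),
      (Tendsto ξ atTop atTop ∨ Tendsto ξ atTop atBot) →
      Tendsto (fun k => (inner ℂ g (F (ξ k)))) atTop (𝓝 0) := by
    intro g ξ hξ
    have hRL := aux_RL_eN ω (fun t => (starRingEnd ℂ) (g t)) ξ hξ
    refine hRL.congr fun k => ?_
    rw [MeasureTheory.L2.inner_def]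
    refine (integral_congr_ae ?_).symm
    filter_upwards [hFcoe (ξ k)] with x hx
    rw [RCLike.inner_apply', hx]
  -- main limiting argument
  have key : ∀ β ∈ ({β₁, β₂} : Set ℂ), A = (ω : ℂ) * β := by
    intro β hβmem
    obtain ⟨ξ, hξpm, hξσ⟩ := hβ β hβmem
    have hσlim : Tendsto (fun k => σ (ξ k)) atTop (𝓝 β) := hξσ
    have hRlim : Tendsto (fun k => R (ξ k)) atTop (𝓝 0) := by
      have := aux_RL_set' ω s ξ hξpm
      simpa [hRdef, hfun] using this
    have h1 : Tendsto (fun k => (inner ℂ (F (ξ k)) (T (F (ξ k))))) atTop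
        (𝓝 ((ω : ℂ) * β + 0)) := by
      simp_rw [hinner1]
      exact (hσlim.const_mul _).add hRlim
    -- compactness: V (F (ξ k)) → 0
    obtain ⟨K, hK, hKsub⟩ :=
      hVc.image_subset_compact_of_bounded (f := (V : Lp ℂ 2 (volume.restrict (Ioo (0:ℝ) ω)) →ₗ[ℂ]
        Lp ℂ 2 (volume.restrict (Ioo (0:ℝ) ω))))
        (Metric.isBounded_closedBall (x := (0 : Lp ℂ 2 (volume.restrict (Ioo (0:ℝ) ω)))) (r := M))
    have hmem : ∀ k, V (F (ξ k)) ∈ K := fun k =>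
      hKsub ⟨F (ξ k), mem_closedBall_zero_iff.mpr (hFnorm (ξ k)), rfl⟩
    have hgV : ∀ g : Lp ℂ 2 (volume.restrict (Ioo (0:ℝ) ω)),
        Tendsto (fun k => (inner ℂ g (V (F (ξ k))))) atTop (𝓝 0) := by
      intro g
      have := hweak ((ContinuousLinearMap.adjoint V) g) ξ hξpm
      refine this.congr fun k => ?_
      exact ContinuousLinearMap.adjoint_inner_left V (F (ξ k)) g
    have hVlim : Tendsto (fun k => V (F (ξ k))) atTop (𝓝 0) := by
      apply tendsto_of_subseq_tendsto
      intro ns hns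
      obtain ⟨w, hwK, ms, hms, hlim⟩ := hK.tendsto_subseq (fun n => hmem (ns n))
      have hw0 : w = 0 := by
        have hwin : (inner ℂ w w) = 0 := by
          have l1 : Tendsto (fun n => (inner ℂ w (V (F (ξ (ns (ms n))))))) atTop
              (𝓝 (inner ℂ w w)) := Tendsto.inner tendsto_const_nhds hlim
          have l2 : Tendsto (fun n => (inner ℂ w (V (F (ξ (ns (ms n))))))) atTop (𝓝 0) :=
            (hgV w).comp (hns.comp hms.tendsto_atTop)
          exact tendsto_nhds_unique l1 l2
        exact inner_self_eq_zero.mp hwin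
      exact ⟨ms, by rwa [hw0] at hlim⟩
    have hVin : Tendsto (fun k => (inner ℂ (F (ξ k)) (V (F (ξ k))))) atTop (𝓝 0) := by
      have hnorms : Tendsto (fun k => M * ‖V (F (ξ k))‖) atTop (𝓝 (M * 0)) :=
        (tendsto_norm_zero.comp hVlim).const_mul M
      rw [mul_zero] at hnorms
      refine squeeze_zero_norm (fun k => ?_) hnorms
      calc ‖(inner ℂ (F (ξ k)) (V (F (ξ k))))‖
          ≤ ‖F (ξ k)‖ * ‖V (F (ξ k))‖ := norm_inner_le_norm _ _
        _ ≤ M * ‖V (F (ξ k))‖ :=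
            mul_le_mul_of_nonneg_right (hFnorm (ξ k)) (norm_nonneg _)
    have h2 : Tendsto (fun k => (inner ℂ (F (ξ k)) (T (F (ξ k))))) atTop (𝓝 (A + 0)) := by
      simp_rw [hinner2]
      exact tendsto_const_nhds.add hVin
    have := tendsto_nhds_unique h1 h2
    rw [add_zero, add_zero] at this
    exact this.symm
  have e1 := key β₁ (by simp)
  have e2 := key β₂ (by simp)
  exact hβne (mul_left_cancel₀ (Complex.ofReal_ne_zero.mpr hω.ne') (e1.symm.trans e2))
end
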